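/- Let d ≥ 1 and let u_i = (ρ_i, m_i) and u_j = (ρ_j, m_j) be states in the realizable set R₁ with m_i ≠ 0 and m_j ≠ 0. Let c ∈ ℝ^d with c ≠ 0 and let d_v ∈ ℝ with d_v ≥ ‖c‖. Then the Lax–Friedrichs bar state ū_{ij} = (u_i + u_j)/2 − (f(u_j)·c − f(u_i)·c)/(2 d_v) belongs to R₁, where f(u)·c = (⟨m, c⟩, ρ · D(m/ρ) c) ∈ ℝ × ℝ^d is the M₁ flux of the state u = (ρ, m) contracted with c. -/

import Mathlib

/-- The realizable set `R₁ = {(ψ⁰, ψ¹) ∈ ℝ × ℝ^d : ψ⁰ > 0, ‖ψ¹‖ < ψ⁰}` of the M₁ model. -/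
def realizableSet (d : ℕ) : Set (ℝ × EuclideanSpace ℝ (Fin d)) :=
  {u | 0 < u.1 ∧ ‖u.2‖ < u.1}

/-- The Eddington factor `χ(f) = (3 + 4f²)/(5 + 2√(4 − 3f²))` of the M₁ closure. -/
noncomputable def eddingtonFactor (f : ℝ) : ℝ :=
  (3 + 4 * f ^ 2) / (5 + 2 * Real.sqrt (4 - 3 * f ^ 2))

/-- The Eddington tensor
`D(v) = ((1 − χ(‖v‖))/2) I_d + ((3χ(‖v‖) − 1)/2) (v ⊗ v)/‖v‖²`. -/
noncomputable def eddingtonTensor (d : ℕ) (v : EuclideanSpace ℝ (Fin d)) :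
    Matrix (Fin d) (Fin d) ℝ :=
  ((1 - eddingtonFactor ‖v‖) / 2) • (1 : Matrix (Fin d) (Fin d) ℝ) +
    ((3 * eddingtonFactor ‖v‖ - 1) / 2 / ‖v‖ ^ 2) • Matrix.of (fun i j => v i * v j)

/-- The M₁ flux of a state `u = (ρ, m)` contracted with `c`:
`f(u)·c = (⟨m, c⟩, ρ D(m/ρ) c) ∈ ℝ × ℝ^d`, using the closure `ψ² = D(ψ¹/ψ⁰)ψ⁰`. -/
noncomputable def m1FluxDotC (d : ℕ) (u : ℝ × EuclideanSpace ℝ (Fin d))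
    (c : EuclideanSpace ℝ (Fin d)) : ℝ × EuclideanSpace ℝ (Fin d) :=
  (inner (𝕜 := ℝ) u.2 c,
    u.1 • (WithLp.toLp 2 ((eddingtonTensor d (u.1⁻¹ • u.2)).mulVec c) : EuclideanSpace ℝ (Fin d)))



set_option maxHeartbeats 1000000 in
private lemma key_scalar (f a t : ℝ) (hf0 : 0 < f) (hf1 : f < 1) (ha : |a| ≤ t) (ht : t ≤ 1) :
    (f + eddingtonFactor f * a) ^ 2 +
      ((1 - eddingtonFactor f) / 2) ^ 2 * (t ^ 2 - a ^ 2) < (1 + f * a) ^ 2 := by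
  set r := Real.sqrt (4 - 3 * f ^ 2) with hr
  have hr2 : r ^ 2 = 4 - 3 * f ^ 2 := Real.sq_sqrt (by nlinarith)
  have hr0 : 0 ≤ r := Real.sqrt_nonneg _
  have hf2 : f ^ 2 < 1 := by nlinarith
  have hr1 : 1 < r := by nlinarith [mul_nonneg hr0 hr0]
  have hr4 : r < 2 := by nlinarith
  have hat := abs_le.mp ha
  have ha1 : -1 ≤ a := by linarith [hat.1]
  have ha2 : a ≤ 1 := by linarith [hat.2]
  have hta : 0 ≤ t ^ 2 - a ^ 2 := by nlinarith [sq_abs a, abs_nonneg a]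
  have ht2 : t ^ 2 ≤ 1 := by nlinarith [abs_nonneg a]
  have hchi : eddingtonFactor f = (5 - 2 * r) / 3 := by
    unfold eddingtonFactor
    rw [← hr, div_eq_div_iff (by nlinarith) (by norm_num)]
    linear_combination (4 : ℝ) * hr2
  rw [hchi]
  have hfr : 2 - r < f := by nlinarith
  have hpos : 0 < (2 - r) * a + f := by nlinarith
  have hident : (2 - r) * 9 * ((1 + f * a) ^ 2 -
      ((f + (5 - 2 * r) / 3 * a) ^ 2 + ((1 - (5 - 2 * r) / 3) / 2) ^ 2 * (t ^ 2 - a ^ 2))) =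
      6 * (r - 1) * ((2 - r) * a + f) ^ 2 + (2 - r) * (r - 1) ^ 2 * (1 - t ^ 2) := by
    linear_combination (r - 4 + 6 * a ^ 2 - 3 * a ^ 2 * r) * hr2
  have hX : 0 < (2 - r) * 9 * ((1 + f * a) ^ 2 -
      ((f + (5 - 2 * r) / 3 * a) ^ 2 + ((1 - (5 - 2 * r) / 3) / 2) ^ 2 * (t ^ 2 - a ^ 2))) := by
    rw [hident]
    have h1 : 0 < 6 * (r - 1) * ((2 - r) * a + f) ^ 2 :=
      mul_pos (by linarith) (pow_pos hpos 2)
    have h2 : 0 ≤ (2 - r) * (r - 1) ^ 2 * (1 - t ^ 2) :=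
      mul_nonneg (mul_nonneg (by linarith) (sq_nonneg _)) (by linarith)
    linarith
  have h9 : (0:ℝ) < (2 - r) * 9 := by linarith
  have hXpos : 0 < (1 + f * a) ^ 2 -
      ((f + (5 - 2 * r) / 3 * a) ^ 2 + ((1 - (5 - 2 * r) / 3) / 2) ^ 2 * (t ^ 2 - a ^ 2)) := by
    by_contra h
    push_neg at h
    have := mul_nonpos_of_nonneg_of_nonpos h9.le h
    linarith
  linarith

private lemma mulVec_eq (d : ℕ) (v w : EuclideanSpace ℝ (Fin d)) (α β : ℝ) :
    ((WithLp.toLp 2 ((α • (1 : Matrix (Fin d) (Fin d) ℝ) + β • Matrix.of (fun i j => v i * v j)).mulVec w) :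
      EuclideanSpace ℝ (Fin d))) = α • w + (β * inner (𝕜 := ℝ) v w) • v := by
  ext i
  simp only [PiLp.toLp_apply, Matrix.mulVec, dotProduct, Matrix.add_apply, Matrix.smul_apply,
    Matrix.of_apply, Matrix.one_apply, smul_eq_mul, PiLp.inner_apply, RCLike.inner_apply,
    starRingEnd_apply, star_trivial, PiLp.add_apply, PiLp.smul_apply, mul_ite, ite_mul,
    mul_one, mul_zero, zero_mul, add_mul, Finset.sum_add_distrib, Finset.sum_ite_eq,
    Finset.mem_univ, if_true, Finset.mul_sum, Finset.sum_mul]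
  congr 1
  exact Finset.sum_congr rfl fun x _ => by ring

private lemma key_vec {d : ℕ} (v w X : EuclideanSpace ℝ (Fin d)) (hv0 : v ≠ 0) (hv : ‖v‖ < 1)
    (hw : ‖w‖ ≤ 1)
    (hX : X = ((1 - eddingtonFactor ‖v‖) / 2) • w +
      ((3 * eddingtonFactor ‖v‖ - 1) / 2 / ‖v‖ ^ 2 * inner (𝕜 := ℝ) v w) • v) :
    ‖v + X‖ < 1 + inner (𝕜 := ℝ) v w := by
  have hf0 : 0 < ‖v‖ := norm_pos_iff.mpr hv0
  set χ := eddingtonFactor ‖v‖ with hχ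
  set α := (1 - χ) / 2 with hα
  set β := (3 * χ - 1) / 2 / ‖v‖ ^ 2 with hβ
  set ip := inner (𝕜 := ℝ) v w with hip
  have hre : v + X = (1 + β * ip) • v + α • w := by
    rw [hX, add_smul, one_smul]; abel
  have hcs : |ip| ≤ ‖v‖ * ‖w‖ := abs_real_inner_le_norm v w
  have habs := abs_le.mp hcs
  have hippos : 0 < 1 + ip := by nlinarith [mul_le_mul_of_nonneg_left hw hf0.le, habs.1]
  have hnorm2 : ‖(1 + β * ip) • v + α • w‖ ^ 2 =
      (1 + β * ip) ^ 2 * ‖v‖ ^ 2 + 2 * ((1 + β * ip) * α * ip) + α ^ 2 * ‖w‖ ^ 2 := by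
    rw [norm_add_sq_real, norm_smul, norm_smul, real_inner_smul_left, real_inner_smul_right,
      ← hip]
    simp only [Real.norm_eq_abs, mul_pow, sq_abs]
    ring
  have hkey := key_scalar ‖v‖ (ip / ‖v‖) ‖w‖ hf0 hv
    (by rw [abs_div, abs_of_pos hf0, div_le_iff₀ hf0, mul_comm]; exact hcs) hw
  have hsq : ‖(1 + β * ip) • v + α • w‖ ^ 2 < (1 + ip) ^ 2 := by
    rw [hnorm2]
    have hident : (1 + β * ip) ^ 2 * ‖v‖ ^ 2 + 2 * ((1 + β * ip) * α * ip) + α ^ 2 * ‖w‖ ^ 2 =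
        (‖v‖ + χ * (ip / ‖v‖)) ^ 2 + ((1 - χ) / 2) ^ 2 * (‖w‖ ^ 2 - (ip / ‖v‖) ^ 2) := by
      rw [hα, hβ]
      field_simp
      ring
    have hfa : 1 + ‖v‖ * (ip / ‖v‖) = 1 + ip := by field_simp
    rw [hident, ← hfa]
    exact hkey
  rw [hre]
  exact lt_of_pow_lt_pow_left₀ 2 hippos.le hsq

private lemma half_state_M1 {d : ℕ} (u : ℝ × EuclideanSpace ℝ (Fin d)) (hu : u ∈ realizableSet d)
    (hm : u.2 ≠ 0) (c : EuclideanSpace ℝ (Fin d)) (s dv : ℝ) (hs : |s| = 1)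
    (hc0 : 0 < ‖c‖) (hdv : ‖c‖ ≤ dv) :
    u + (s * dv⁻¹) • m1FluxDotC d u c ∈ realizableSet d := by
  obtain ⟨hρ, hnm⟩ := hu
  set ρ := u.1 with hρdef
  set m := u.2 with hmdef
  have hdv0 : 0 < dv := lt_of_lt_of_le hc0 hdv
  set v : EuclideanSpace ℝ (Fin d) := ρ⁻¹ • m with hvdef
  set w : EuclideanSpace ℝ (Fin d) := (s * dv⁻¹) • c with hwdef
  set α := (1 - eddingtonFactor ‖v‖) / 2 with hα
  set β := (3 * eddingtonFactor ‖v‖ - 1) / 2 / ‖v‖ ^ 2 with hβ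
  have hρ0 : ρ ≠ 0 := hρ.ne'
  have hv0 : v ≠ 0 := smul_ne_zero (inv_ne_zero hρ0) hm
  have hvnorm : ‖v‖ = ρ⁻¹ * ‖m‖ := by
    rw [hvdef, norm_smul, Real.norm_eq_abs, abs_of_pos (inv_pos.mpr hρ)]
  have hv1 : ‖v‖ < 1 := by
    rw [hvnorm]
    calc ρ⁻¹ * ‖m‖ < ρ⁻¹ * ρ := by exact mul_lt_mul_of_pos_left hnm (inv_pos.mpr hρ)
    _ = 1 := inv_mul_cancel₀ hρ0
  have hw1 : ‖w‖ ≤ 1 := by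
    rw [hwdef, norm_smul, Real.norm_eq_abs, abs_mul, hs, one_mul, abs_of_pos (inv_pos.mpr hdv0)]
    rw [← inv_mul_cancel₀ hdv0.ne']
    exact mul_le_mul_of_nonneg_left hdv (inv_pos.mpr hdv0).le
  -- the matrix-vector product
  have hY : (WithLp.toLp 2 ((eddingtonTensor d v).mulVec c) : EuclideanSpace ℝ (Fin d)) =
      α • c + (β * inner (𝕜 := ℝ) v c) • v := mulVec_eq d v c α β
  set X : EuclideanSpace ℝ (Fin d) :=
    (s * dv⁻¹) • (α • c + (β * inner (𝕜 := ℝ) v c) • v) with hXdef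
  have hXeq : X = α • w + (β * inner (𝕜 := ℝ) v w) • v := by
    rw [hXdef, hwdef, real_inner_smul_right]
    module
  have hkv := key_vec v w X hv0 hv1 hw1 hXeq
  have hip : inner (𝕜 := ℝ) v w = ρ⁻¹ * (s * dv⁻¹) * inner (𝕜 := ℝ) m c := by
    rw [hvdef, hwdef, real_inner_smul_left, real_inner_smul_right]; ring
  have hippos : 0 < 1 + inner (𝕜 := ℝ) v w := lt_of_le_of_lt (norm_nonneg _) hkv
  -- components of the target state
  have hfst : (u + (s * dv⁻¹) • m1FluxDotC d u c).1 =
      ρ * (1 + inner (𝕜 := ℝ) v w) := by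
    simp only [Prod.fst_add, Prod.smul_fst, m1FluxDotC, smul_eq_mul, hip]
    field_simp
    ring
  have hsnd : (u + (s * dv⁻¹) • m1FluxDotC d u c).2 = ρ • (v + X) := by
    have hrv : ρ • v = m := by
      rw [hvdef, smul_smul, mul_inv_cancel₀ hρ0, one_smul]
    simp only [Prod.snd_add, Prod.smul_snd, m1FluxDotC]
    rw [← hvdef, ← hmdef, hY, hXdef, smul_add ρ v, hrv, smul_comm ρ (s * dv⁻¹)]
  constructor
  · rw [hfst]
    exact mul_pos hρ hippos
  · rw [hfst, hsnd, norm_smul, Real.norm_eq_abs, abs_of_pos hρ]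
    exact mul_lt_mul_of_pos_left hkv hρ

private lemma mid_realizable {d : ℕ} {A B : ℝ × EuclideanSpace ℝ (Fin d)}
    (hA : A ∈ realizableSet d) (hB : B ∈ realizableSet d) :
    (2 : ℝ)⁻¹ • A + (2 : ℝ)⁻¹ • B ∈ realizableSet d := by
  obtain ⟨hA1, hA2⟩ := hA
  obtain ⟨hB1, hB2⟩ := hB
  constructor
  · simp only [Prod.fst_add, Prod.smul_fst, smul_eq_mul]
    positivity
  · simp only [Prod.snd_add, Prod.smul_snd, Prod.fst_add, Prod.smul_fst, smul_eq_mul]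
    calc ‖(2:ℝ)⁻¹ • A.2 + (2:ℝ)⁻¹ • B.2‖ ≤ ‖(2:ℝ)⁻¹ • A.2‖ + ‖(2:ℝ)⁻¹ • B.2‖ := norm_add_le _ _
      _ = (2:ℝ)⁻¹ * ‖A.2‖ + (2:ℝ)⁻¹ * ‖B.2‖ := by
          rw [norm_smul, norm_smul, Real.norm_eq_abs]; rw [abs_of_pos (by norm_num : (0:ℝ) < 2⁻¹)]
      _ < (2:ℝ)⁻¹ * A.1 + (2:ℝ)⁻¹ * B.1 := by
          have := mul_lt_mul_of_pos_left hA2 (by norm_num : (0:ℝ) < 2⁻¹)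
          have := mul_lt_mul_of_pos_left hB2 (by norm_num : (0:ℝ) < 2⁻¹)
          linarith

/-- The Lax–Friedrichs bar state
`ū_{ij} = (u_i + u_j)/2 − (f(u_j)·c − f(u_i)·c)/(2 d_v)` of two realizable states
`u_i, u_j ∈ R₁` (with nonvanishing first moments) is realizable whenever `d_v ≥ ‖c‖ > 0`. -/
theorem barState_realizable (d : ℕ) (hd : 1 ≤ d)
    (ui uj : ℝ × EuclideanSpace ℝ (Fin d))
    (hui : ui ∈ realizableSet d) (huj : uj ∈ realizableSet d)
    (hmi : ui.2 ≠ 0) (hmj : uj.2 ≠ 0)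
    (c : EuclideanSpace ℝ (Fin d)) (hc : c ≠ 0)
    (dv : ℝ) (hdv : ‖c‖ ≤ dv) :
    (2 : ℝ)⁻¹ • (ui + uj) - (2 * dv)⁻¹ • (m1FluxDotC d uj c - m1FluxDotC d ui c) ∈
      realizableSet d := by
  have hc0 : 0 < ‖c‖ := norm_pos_iff.mpr hc
  have hdv0 : 0 < dv := lt_of_lt_of_le hc0 hdv
  have hA := half_state_M1 ui hui hmi c 1 dv (by norm_num) hc0 hdv
  have hB := half_state_M1 uj huj hmj c (-1) dv (by norm_num) hc0 hdv
  have hdecomp : (2 : ℝ)⁻¹ • (ui + uj) -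
      (2 * dv)⁻¹ • (m1FluxDotC d uj c - m1FluxDotC d ui c) =
      (2 : ℝ)⁻¹ • (ui + (1 * dv⁻¹) • m1FluxDotC d ui c) +
      (2 : ℝ)⁻¹ • (uj + ((-1) * dv⁻¹) • m1FluxDotC d uj c) := by
    rw [mul_inv]
    module
  rw [hdecomp]
  exact mid_realizable hA hB
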